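/- Let y : ℝ → ℝ be a twice differentiable function satisfying ÿ(t) = y(t) ẏ(t) √(1 − ẏ(t)²) with |ẏ(t)| < 1 for all t, and set c = y(0)²/2 − arcsin(ẏ(0)). Then for all t: 2c − π ≤ y(t)² ≤ 2c + π. In particular y is bounded, so the corresponding geodesic of the vector field V = y ∂_x in the plane is confined to a horizontal strip; consequently two points of ℝ² lying in different geodesic strips cannot be joined by such a geodesic, and the Hopf–Rinow theorem fails for metric connections with vectorial torsion. -/

import Mathlib

/-- A solution of the ODE `ÿ = y ẏ √(1 − ẏ²)` with `|ẏ| < 1` is confined to the strip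
`2c − π ≤ y² ≤ 2c + π`, where `c = y(0)²/2 − arcsin ẏ(0)`: geodesics of the vectorial
torsion connection of `V = y ∂_x` stay in horizontal strips, so two points in different
strips cannot be joined by a geodesic and the Hopf–Rinow theorem fails. -/
theorem y_ODE_bounded_strip
    (y : ℝ → ℝ)
    (hy : Differentiable ℝ y) (hy' : Differentiable ℝ (deriv y))
    (hbound : ∀ t : ℝ, |deriv y t| < 1)
    (hODE : ∀ t : ℝ, deriv (deriv y) t
        = y t * deriv y t * Real.sqrt (1 - (deriv y t) ^ 2))
    (c : ℝ) (hc : c = (y 0) ^ 2 / 2 - Real.arcsin (deriv y 0)) :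
    ∀ t : ℝ, 2 * c - Real.pi ≤ (y t) ^ 2 ∧ (y t) ^ 2 ≤ 2 * c + Real.pi := by
  set f : ℝ → ℝ := fun t => (y t) ^ 2 / 2 - Real.arcsin (deriv y t) with hf
  have hderiv : ∀ t, HasDerivAt f 0 t := by
    intro t
    have hlt := hbound t
    have h1 : deriv y t ≠ -1 := by
      intro h; rw [h] at hlt; norm_num at hlt
    have h2 : deriv y t ≠ 1 := by
      intro h; rw [h] at hlt; norm_num at hlt
    have hpos : 0 < 1 - (deriv y t) ^ 2 := by
      have := abs_lt.mp hlt
      nlinarith [this.1, this.2]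
    have hs : Real.sqrt (1 - (deriv y t) ^ 2) ≠ 0 := by positivity
    have hy2 : HasDerivAt (fun t => (y t) ^ 2 / 2) (y t * deriv y t) t := by
      have := ((hy t).hasDerivAt.pow 2).div_const 2
      exact this.congr_deriv (by ring)
    have harc : HasDerivAt (fun t => Real.arcsin (deriv y t))
        ((1 / Real.sqrt (1 - (deriv y t) ^ 2)) * deriv (deriv y) t) t :=
      (Real.hasDerivAt_arcsin h1 h2).comp t (hy' t).hasDerivAt
    have := hy2.sub harc
    refine this.congr_deriv ?_
    rw [hODE t]
    field_simp
    ring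
  have hconst : ∀ t, f t = f 0 := by
    intro t
    have : ∀ s, deriv f s = 0 := fun s => (hderiv s).deriv
    exact is_const_of_deriv_eq_zero (fun s => (hderiv s).differentiableAt) this t 0
  intro t
  have hft : (y t) ^ 2 / 2 - Real.arcsin (deriv y t) = c := by
    rw [hc]; exact hconst t
  have hlo := Real.neg_pi_div_two_le_arcsin (deriv y t)
  have hhi := Real.arcsin_le_pi_div_two (deriv y t)
  constructor <;> nlinarith [hlo, hhi]
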